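/- Under the general position assumptions, the Kokotsakis mesh is infinitesimally flexible (with the central face fixed) if and only if χ(M) = 1, i.e. ∏_{i=1}^n (a_{i−1},v_i,w_i)/(a_i,v_i,w_i) = 1. -/

import Mathlib

open Matrix

/-- The scalar triple product `(a, b, c) = ⟨a, [b, c]⟩` in `ℝ³`. -/
noncomputable def tripleProd (a b c : Fin 3 → ℝ) : ℝ := a ⬝ᵥ crossProduct b c
lemma cross_par {x c : Fin 3 → ℝ} (hc : c ≠ 0) (h : crossProduct x c = 0) :
    ∃ s : ℝ, x = s • c := by
  have h0 := congrFun h 0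
  have h1 := congrFun h 1
  have h2 := congrFun h 2
  simp [cross_apply] at h0 h1 h2
  have hc' : c 0 ≠ 0 ∨ c 1 ≠ 0 ∨ c 2 ≠ 0 := by
    by_contra hk
    push_neg at hk
    exact hc (funext fun i => by fin_cases i <;> simp [hk.1, hk.2.1, hk.2.2])
  rcases hc' with hc0 | hc1 | hc2
  · exact ⟨x 0 / c 0, funext fun i => by fin_cases i <;> (simp; field_simp) <;> linarith⟩
  · exact ⟨x 1 / c 1, funext fun i => by fin_cases i <;> (simp; field_simp) <;> linarith⟩
  · exact ⟨x 2 / c 2, funext fun i => by fin_cases i <;> (simp; field_simp) <;> linarith⟩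

lemma perp_perp {x a b : Fin 3 → ℝ} (h1 : x ⬝ᵥ a = 0) (h2 : x ⬝ᵥ b = 0) :
    crossProduct x (crossProduct a b) = 0 := by
  simp [dotProduct, Fin.sum_univ_three] at h1 h2
  funext i
  fin_cases i
  · simp [cross_apply]; linear_combination a 0 * h2 - b 0 * h1
  · simp [cross_apply]; linear_combination a 1 * h2 - b 1 * h1
  · simp [cross_apply]; linear_combination a 2 * h2 - b 2 * h1
lemma triple_ne_zero {u v w : Fin 3 → ℝ} (hvw : LinearIndependent ℝ ![v, w])
    (hu : u ∉ Submodule.span ℝ ({v, w} : Set (Fin 3 → ℝ))) : tripleProd u v w ≠ 0 := by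
  have hr : Set.range ![v, w] = {v, w} := by
    simp [Set.range_subset_iff]
    ext x; simp [Fin.exists_fin_two]; tauto
  have hli : LinearIndependent ℝ ![u, v, w] := by
    rw [show (![u, v, w] : Fin 3 → Fin 3 → ℝ) = Fin.cons u ![v, w] from rfl,
      linearIndependent_fin_cons, hr]
    exact ⟨hvw, hu⟩
  have : IsUnit (Matrix.of ![u, v, w]) := by
    rw [← Matrix.linearIndependent_rows_iff_isUnit]
    exact hli
  have hdet : Matrix.det ![u, v, w] ≠ 0 := by
    have h2 := (Matrix.isUnit_iff_isUnit_det _).mp this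
    exact (by simpa [isUnit_iff_ne_zero] using h2 : (Matrix.of ![u, v, w]).det ≠ 0)
  rw [tripleProd, triple_product_eq_det]
  exact hdet

lemma dot_cyc (a v w : Fin 3 → ℝ) : w ⬝ᵥ crossProduct a v = tripleProd a v w := by
  simp [tripleProd, cross_apply, dotProduct, Fin.sum_univ_three]; ring

lemma dot_neg (a v w : Fin 3 → ℝ) : v ⬝ᵥ crossProduct a w = - tripleProd a v w := by
  simp [tripleProd, cross_apply, dotProduct, Fin.sum_univ_three]; ring

lemma dot_cyc' (a w u : Fin 3 → ℝ) : crossProduct a w ⬝ᵥ u = tripleProd a w u := by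
  simp [tripleProd, cross_apply, dotProduct, Fin.sum_univ_three]; ring

lemma dot_selfA (a v : Fin 3 → ℝ) : a ⬝ᵥ crossProduct a v = 0 := by
  simp [cross_apply, dotProduct, Fin.sum_univ_three]; ring

lemma dot_selfB (a v : Fin 3 → ℝ) : v ⬝ᵥ crossProduct a v = 0 := by
  simp [cross_apply, dotProduct, Fin.sum_univ_three]; ring
lemma mem_span_pair' {u v w : Fin 3 → ℝ} (s : ℝ) (h : u = s • v) :
    u ∈ Submodule.span ℝ ({v, w} : Set (Fin 3 → ℝ)) := by
  rw [Submodule.mem_span_pair]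
  exact ⟨s, 0, by simp [h.symm]⟩

lemma cross_ne_A {u v w : Fin 3 → ℝ} (hvw : LinearIndependent ℝ ![v, w])
    (hu : u ∉ Submodule.span ℝ ({v, w} : Set (Fin 3 → ℝ))) : crossProduct u v ≠ 0 := by
  intro h
  obtain ⟨s, hs⟩ := cross_par (hvw.ne_zero 0) h
  exact hu (mem_span_pair' s (by simpa using hs))

lemma cross_ne_B {u v w : Fin 3 → ℝ} (hvw : LinearIndependent ℝ ![v, w])
    (hu : u ∉ Submodule.span ℝ ({v, w} : Set (Fin 3 → ℝ))) : crossProduct u w ≠ 0 := by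
  intro h
  obtain ⟨s, hs⟩ := cross_par (hvw.ne_zero 1) h
  apply hu
  rw [Submodule.mem_span_pair]
  exact ⟨0, s, by simp [(by simpa using hs : u = s • w).symm]⟩

lemma triple_swap (a b c : Fin 3 → ℝ) : tripleProd a c b = - tripleProd a b c := by
  simp [tripleProd, cross_apply, dotProduct, Fin.sum_univ_three]; ring

lemma dot_cyc2 (a u x : Fin 3 → ℝ) : x ⬝ᵥ crossProduct a u = - tripleProd a x u := by
  simp [tripleProd, cross_apply, dotProduct, Fin.sum_univ_three]; ring

section ZM
variable {n : ℕ} [NeZero n]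

lemma zcast (i : ZMod n) : ((i.val : ℕ) : ZMod n) = i := ZMod.natCast_rightInverse i

lemma zsucc {i : ZMod n} (h : i + 1 ≠ 0) : (i + 1).val = i.val + 1 := by
  have hlt : i.val < n := ZMod.val_lt i
  have hne : i.val + 1 ≠ n := by
    intro he
    apply h
    have h2 : ((i.val : ℕ) : ZMod n) = ((n - 1 : ℕ) : ZMod n) := by
      rw [show n - 1 = i.val from by omega]
    rw [zcast] at h2
    rw [h2]
    have h3 : ((n : ℕ) : ZMod n) = 0 := ZMod.natCast_self n
    have : ((n - 1 : ℕ) : ZMod n) = (n : ZMod n) - 1 := by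
      push_cast [Nat.cast_sub (by omega : 1 ≤ n)]; ring
    rw [this, h3]; ring
  have h4 : (i + 1 : ZMod n) = ((i.val + 1 : ℕ) : ZMod n) := by push_cast [zcast]; ring
  rw [h4, ZMod.val_natCast, Nat.mod_eq_of_lt (by omega)]

lemma zprod (f : ZMod n → ℝ) : ∏ k ∈ Finset.range n, f (k : ZMod n) = ∏ j : ZMod n, f j := by
  refine Finset.prod_nbij' (fun k => (k : ZMod n)) (fun j => j.val) ?_ ?_ ?_ ?_ ?_ <;>
      simp [ZMod.val_lt, zcast, ZMod.val_natCast]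
  intro k hk
  exact Nat.mod_eq_of_lt hk

lemma cycle_prod (s ρ : ZMod n → ℝ) (hρ : ∀ i, ρ i ≠ 0)
    (hrec : ∀ i, s (i + 1) = s i * ρ i) (j : ZMod n) (hj : s j ≠ 0) :
    ∏ i : ZMod n, ρ i = 1 := by
  have key : ∀ k : ℕ, s (j + k) ≠ 0 := by
    intro k
    induction k with
    | zero => simpa using hj
    | succ m ih =>
        have h5 : (j + ((m + 1 : ℕ) : ZMod n)) = (j + (m : ℕ)) + 1 := by push_cast; ring
        rw [h5, hrec]
        exact mul_ne_zero ih (hρ _)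
  have hall : ∀ i, s i ≠ 0 := by
    intro i
    have h6 : i = j + ((i - j).val : ℕ) := by rw [zcast]; ring
    rw [h6]; exact key _
  have h1 : ∏ i : ZMod n, s (i + 1) = ∏ i : ZMod n, (s i * ρ i) :=
    Finset.prod_congr rfl fun i _ => hrec i
  have h2 : ∏ i : ZMod n, s (i + 1) = ∏ i : ZMod n, s i :=
    Fintype.prod_equiv (Equiv.addRight (1 : ZMod n)) (fun i => s (i + 1)) s (fun i => rfl)
  rw [h2, Finset.prod_mul_distrib] at h1
  have hsne : ∏ i : ZMod n, s i ≠ 0 := Finset.prod_ne_zero_iff.mpr fun i _ => hall i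
  field_simp at h1
  nlinarith [h1, sq_nonneg (∏ i : ZMod n, s i)]

lemma exists_cycle (hn : 3 ≤ n) (ρ : ZMod n → ℝ) (hprod : ∏ i : ZMod n, ρ i = 1) :
    ∃ s : ZMod n → ℝ, s 0 = 1 ∧ ∀ i, s (i + 1) = s i * ρ i := by
  obtain ⟨m, rfl⟩ : ∃ m, n = m + 1 := ⟨n - 1, by omega⟩
  refine ⟨fun i => ∏ k ∈ Finset.range i.val, ρ (k : ZMod (m + 1)), by simp, ?_⟩
  intro i
  show ∏ k ∈ Finset.range (i + 1).val, ρ (k : ZMod (m + 1))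
      = (∏ k ∈ Finset.range i.val, ρ (k : ZMod (m + 1))) * ρ i
  by_cases h0 : i + 1 = 0
  · have hi : i = -1 := by linear_combination h0
    have hv1 : ((-1 : ZMod (m + 1)).val) = m := ZMod.val_neg_one m
    rw [h0, hi, hv1, ZMod.val_zero, Finset.prod_range_zero]
    have hm : ((m : ℕ) : ZMod (m + 1)) = -1 := by
      have := ZMod.natCast_self (m + 1)
      push_cast at this
      linear_combination this
    calc (1 : ℝ) = ∏ j : ZMod (m + 1), ρ j := hprod.symm
      _ = ∏ k ∈ Finset.range (m + 1), ρ (k : ZMod (m + 1)) := (zprod ρ).symm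
      _ = (∏ k ∈ Finset.range m, ρ (k : ZMod (m + 1))) * ρ ((m : ℕ) : ZMod (m + 1)) :=
          Finset.prod_range_succ _ _
      _ = (∏ k ∈ Finset.range m, ρ (k : ZMod (m + 1))) * ρ (-1) := by rw [hm]
  · rw [zsucc h0, Finset.prod_range_succ, zcast]

end ZM

/-- **Kokotsakis' infinitesimal flexibility criterion.**  A Kokotsakis mesh in general
position, with the central `n`-gonal face fixed, is infinitesimally flexible iff
`χ(M) = ∏ᵢ (a_{i-1}, vᵢ, wᵢ)/(aᵢ, vᵢ, wᵢ) = 1`. -/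
theorem stmt1 (n : ℕ) [NeZero n] (hn : 3 ≤ n)
    (A v w : ZMod n → (Fin 3 → ℝ))
    (a : ZMod n → (Fin 3 → ℝ)) (ha : ∀ i, a i = A (i + 1) - A i)
    (hvw : ∀ i, LinearIndependent ℝ ![v i, w i])
    (hprev : ∀ i, a (i - 1) ∉ Submodule.span ℝ ({v i, w i} : Set (Fin 3 → ℝ)))
    (hnext : ∀ i, a i ∉ Submodule.span ℝ ({v i, w i} : Set (Fin 3 → ℝ)))
    (hgen : ∀ i, tripleProd (a i) (w i) (v (i + 1)) ≠ 0) :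
    (∃ vd wd : ZMod n → (Fin 3 → ℝ),
        ¬(vd = 0 ∧ wd = 0) ∧
        ∀ i : ZMod n,
          v i ⬝ᵥ vd i = 0 ∧
          w i ⬝ᵥ wd i = 0 ∧
          vd i ⬝ᵥ w i + v i ⬝ᵥ wd i = 0 ∧
          a (i - 1) ⬝ᵥ vd i = 0 ∧
          a i ⬝ᵥ wd i = 0 ∧
          wd i ⬝ᵥ v (i + 1) + w i ⬝ᵥ vd (i + 1) = 0)
    ↔ ∏ i : ZMod n, tripleProd (a (i - 1)) (v i) (w i) / tripleProd (a i) (v i) (w i) = 1 := by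
  have hp : ∀ i, tripleProd (a (i - 1)) (v i) (w i) ≠ 0 :=
    fun i => triple_ne_zero (hvw i) (hprev i)
  have hq : ∀ i, tripleProd (a i) (v i) (w i) ≠ 0 :=
    fun i => triple_ne_zero (hvw i) (hnext i)
  have hρ : ∀ i : ZMod n,
      tripleProd (a (i - 1)) (v i) (w i) / tripleProd (a i) (v i) (w i) ≠ 0 :=
    fun i => div_ne_zero (hp i) (hq i)
  constructor
  · rintro ⟨vd, wd, hne, hcond⟩
    -- extract scalar descriptions
    have hsv : ∀ i, ∃ s : ℝ, vd i = s • crossProduct (a (i - 1)) (v i) := by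
      intro i
      refine cross_par (cross_ne_A (hvw i) (hprev i)) (perp_perp ?_ ?_)
      · rw [dotProduct_comm]; exact (hcond i).2.2.2.1
      · rw [dotProduct_comm]; exact (hcond i).1
    have htw : ∀ i, ∃ t : ℝ, wd i = t • crossProduct (a i) (w i) := by
      intro i
      refine cross_par (cross_ne_B (hvw i) (hnext i)) (perp_perp ?_ ?_)
      · rw [dotProduct_comm]; exact (hcond i).2.2.2.2.1
      · rw [dotProduct_comm]; exact (hcond i).2.1
    choose s hs using hsv
    choose t ht using htw
    -- condition 3 gives s i * p i = t i * q i
    have h3 : ∀ i, s i * tripleProd (a (i - 1)) (v i) (w i)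
        = t i * tripleProd (a i) (v i) (w i) := by
      intro i
      have := (hcond i).2.2.1
      rw [hs i, ht i, smul_dotProduct, dotProduct_smul, dot_cyc', dot_neg] at this
      simp only [smul_eq_mul] at this
      linarith
    -- condition 6 gives t i = s (i + 1)
    have h6 : ∀ i, t i = s (i + 1) := by
      intro i
      have hc := (hcond i).2.2.2.2.2
      rw [ht i, hs (i + 1), add_sub_cancel_right, smul_dotProduct, dotProduct_smul,
        dot_cyc', dot_cyc2] at hc
      simp only [smul_eq_mul] at hc
      have hg := hgen i
      have : (t i - s (i + 1)) * tripleProd (a i) (w i) (v (i + 1)) = 0 := by linarith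
      rcases mul_eq_zero.mp this with h | h
      · linarith
      · exact absurd h hg
    have hrec : ∀ i : ZMod n, s (i + 1)
        = s i * (tripleProd (a (i - 1)) (v i) (w i) / tripleProd (a i) (v i) (w i)) := by
      intro i
      have := h3 i
      rw [h6 i] at this
      rw [← mul_div_assoc, eq_div_iff (hq i)]
      linarith
    -- nontriviality gives some s j ≠ 0
    have hj : ∃ j, s j ≠ 0 := by
      by_contra hcon
      push_neg at hcon
      apply hne
      constructor
      · funext i; rw [Pi.zero_apply, hs i, hcon i, zero_smul]
      · funext i; rw [Pi.zero_apply, ht i, h6 i, hcon (i + 1), zero_smul]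
    obtain ⟨j, hj⟩ := hj
    exact cycle_prod s _ hρ hrec j hj
  · intro hprod
    obtain ⟨s, hs0, hrec⟩ := exists_cycle hn _ hprod
    refine ⟨fun i => s i • crossProduct (a (i - 1)) (v i),
      fun i => s (i + 1) • crossProduct (a i) (w i), ?_, ?_⟩
    · rintro ⟨hv0, _⟩
      have h1 := congrFun hv0 0
      simp only [Pi.zero_apply, hs0, one_smul] at h1
      exact cross_ne_A (hvw 0) (hprev 0) h1
    · intro i
      refine ⟨?_, ?_, ?_, ?_, ?_, ?_⟩
      · rw [dotProduct_smul, dot_selfB, smul_zero]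
      · rw [dotProduct_smul, dot_selfB, smul_zero]
      · rw [smul_dotProduct, dotProduct_smul, dot_cyc', dot_neg]
        simp only [smul_eq_mul]
        have h := hrec i
        have hqi := hq i
        field_simp at h
        linarith
      · rw [dotProduct_smul, dot_selfA, smul_zero]
      · rw [dotProduct_smul, dot_selfA, smul_zero]
      · beta_reduce
        rw [add_sub_cancel_right, smul_dotProduct, dotProduct_smul, dot_cyc', dot_cyc2]
        simp only [smul_eq_mul]
        ring
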